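/- Let A, B be real n×n matrices with B − A invertible, and let τ_J for each nonempty J ⊆ {1,…,n} with B_J − A_J invertible denote μ_J/(1+μ_J) with μ_J = ρ((B_J − A_J)⁻¹A_J). Assume (c1) A is entrywise nonnegative, (c2) B_{ij} ≤ A_{ij} for i ≠ j, and (c3) there is an entrywise positive u with (B−A)u entrywise positive. Then for every nonempty J ⊆ {1,…,n}: the matrix tB_J − A_J is an M-matrix for all t with τ_J ≤ t ≤ 1, and tB_J − A_J is not an M-matrix for all t with 0 < t < τ_J. -/

import Mathlib

open Matrix

/-- Spectral radius of a real matrix: supremum of the absolute values of its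
complex eigenvalues. -/
noncomputable def specRad {m : Type*} [Fintype m] [DecidableEq m] (M : Matrix m m ℝ) : ℝ :=
  sSup ((fun z : ℂ => ‖z‖) '' spectrum ℂ (M.map (algebraMap ℝ ℂ)))

/-- Principal submatrix of `A` with rows and columns indexed by `J`. -/
def subm {n : ℕ} (A : Matrix (Fin n) (Fin n) ℝ) (J : Finset (Fin n)) :
    Matrix {i // i ∈ J} {i // i ∈ J} ℝ :=
  A.submatrix Subtype.val Subtype.val

/-- `X` is an M-matrix: `X = q•I − P` with `P ≥ 0` and `q ≥ ρ(P)`. -/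
def IsMMatrix {m : Type*} [Fintype m] [DecidableEq m] (X : Matrix m m ℝ) : Prop :=
  ∃ q : ℝ, ∃ P : Matrix m m ℝ, (∀ i j, 0 ≤ P i j) ∧ X = q • 1 - P ∧ specRad P ≤ q

/-- `X` is a nonsingular M-matrix: `X = q•I − P` with `P ≥ 0` and `q > ρ(P)`. -/
def IsNonsingMMatrix {m : Type*} [Fintype m] [DecidableEq m] (X : Matrix m m ℝ) : Prop :=
  ∃ q : ℝ, ∃ P : Matrix m m ℝ, (∀ i j, 0 ≤ P i j) ∧ X = q • 1 - P ∧ specRad P < q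

/-- `τ_J = μ_J/(1+μ_J)` with `μ_J = ρ((B_J − A_J)⁻¹A_J)`. -/
noncomputable def tauJ {n : ℕ} (A B : Matrix (Fin n) (Fin n) ℝ)
    (J : Finset (Fin n)) : ℝ :=
  specRad ((subm B J - subm A J)⁻¹ * subm A J) /
    (1 + specRad ((subm B J - subm A J)⁻¹ * subm A J))

set_option linter.unusedSectionVars false
set_option maxHeartbeats 1000000

namespace MM

variable {m : Type*} [Fintype m] [DecidableEq m]

/-- complexification -/
noncomputable def cx (M : Matrix m m ℝ) : Matrix m m ℂ := M.map (algebraMap ℝ ℂ)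

lemma specRad_eq (M : Matrix m m ℝ) :
    specRad M = sSup ((fun z : ℂ => ‖z‖) '' spectrum ℂ (cx M)) := rfl

lemma mem_spec_iff_det (N : Matrix m m ℂ) (z : ℂ) :
    z ∈ spectrum ℂ N ↔ (z • (1 : Matrix m m ℂ) - N).det = 0 := by
  rw [spectrum.mem_iff, Matrix.isUnit_iff_isUnit_det, isUnit_iff_ne_zero, not_ne_iff,
    Algebra.algebraMap_eq_smul_one]

lemma mem_spec_iff (N : Matrix m m ℂ) (z : ℂ) :
    z ∈ spectrum ℂ N ↔ ∃ v, v ≠ 0 ∧ N.mulVec v = z • v := by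
  rw [mem_spec_iff_det, ← Matrix.exists_mulVec_eq_zero_iff]
  constructor
  · rintro ⟨v, hv, h⟩
    refine ⟨v, hv, ?_⟩
    rw [Matrix.sub_mulVec, Matrix.smul_mulVec, Matrix.one_mulVec, sub_eq_zero] at h
    exact h.symm
  · rintro ⟨v, hv, h⟩
    refine ⟨v, hv, ?_⟩
    rw [Matrix.sub_mulVec, Matrix.smul_mulVec, Matrix.one_mulVec, sub_eq_zero, h]

lemma eval_charpoly (N : Matrix m m ℂ) (z : ℂ) :
    N.charpoly.eval z = (z • (1 : Matrix m m ℂ) - N).det := by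
  have h1 : N.charpoly.eval z = (Polynomial.evalRingHom z) N.charpoly := rfl
  rw [h1, Matrix.charpoly, RingHom.map_det]
  congr 1
  ext i j
  by_cases h : i = j
  · subst h
    simp [Matrix.charmatrix_apply, Matrix.diagonal_apply, Matrix.one_apply]
  · simp [Matrix.charmatrix_apply, Matrix.diagonal_apply, Matrix.one_apply, h]

lemma spec_finite (N : Matrix m m ℂ) : (spectrum ℂ N).Finite := by
  apply Set.Finite.subset (Polynomial.finite_setOf_isRoot (N.charpoly_monic.ne_zero))
  intro z hz
  rw [mem_spec_iff_det] at hz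
  show N.charpoly.IsRoot z
  rw [Polynomial.IsRoot, eval_charpoly, hz]

lemma spec_nonempty [Nonempty m] (N : Matrix m m ℂ) : (spectrum ℂ N).Nonempty := by
  obtain ⟨z, hz⟩ := Complex.exists_root (f := N.charpoly)
    (by rw [Matrix.charpoly_degree_eq_dim]; exact_mod_cast Fintype.card_pos)
  exact ⟨z, (mem_spec_iff_det N z).2 (by rw [← eval_charpoly]; exact hz)⟩

lemma abs_le_specRad (M : Matrix m m ℝ) {z : ℂ} (hz : z ∈ spectrum ℂ (cx M)) :
    ‖z‖ ≤ specRad M :=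
  le_csSup (((spec_finite (cx M)).image _).bddAbove) ⟨z, hz, rfl⟩

lemma exists_specRad [Nonempty m] (M : Matrix m m ℝ) :
    ∃ z ∈ spectrum ℂ (cx M), ‖z‖ = specRad M := by
  have h := Set.Nonempty.csSup_mem ((spec_nonempty (cx M)).image (fun z : ℂ => ‖z‖))
    ((spec_finite (cx M)).image (fun z : ℂ => ‖z‖))
  obtain ⟨z, hz, hze⟩ := h
  exact ⟨z, hz, hze⟩

lemma specRad_nonneg [Nonempty m] (M : Matrix m m ℝ) : 0 ≤ specRad M := by
  obtain ⟨z, _, hze⟩ := exists_specRad M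
  rw [← hze]; exact norm_nonneg _



/-- triangle inequality for a complex eigen-relation of a nonneg real matrix -/
lemma abs_eigen (M : Matrix m m ℝ) (hM : ∀ i j, 0 ≤ M i j) {z : ℂ} {v : m → ℂ}
    (hv : (cx M).mulVec v = z • v) (i : m) :
    ‖z‖ * ‖v i‖ ≤ M.mulVec (fun j => ‖v j‖) i := by
  have h1 : (cx M).mulVec v i = z * v i := by rw [hv]; rfl
  have h2 : ‖(cx M).mulVec v i‖ = ‖z‖ * ‖v i‖ := by
    rw [h1, norm_mul]
  rw [← h2]
  have h3 : (cx M).mulVec v i = ∑ j, ((M i j : ℝ) : ℂ) * v j := rfl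
  rw [h3]
  calc ‖∑ j, ((M i j : ℝ) : ℂ) * v j‖
      ≤ ∑ j, ‖((M i j : ℝ) : ℂ) * v j‖ := norm_sum_le _ _
    _ = ∑ j, M i j * ‖v j‖ := by
        apply Finset.sum_congr rfl; intro j _
        rw [norm_mul, Complex.norm_real, Real.norm_eq_abs, abs_of_nonneg (hM i j)]
    _ = M.mulVec (fun j => ‖v j‖) i := rfl

/-- key pointwise bound derived from an eigenvector -/
lemma eigen_bound [Nonempty m] (M : Matrix m m ℝ) (hM : ∀ i j, 0 ≤ M i j)
    (u : m → ℝ) (hu : ∀ i, 0 < u i) {z : ℂ} (hz : z ∈ spectrum ℂ (cx M)) :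
    ∃ i0 : m, ∃ r : ℝ, 0 < r ∧ ‖z‖ * (r * u i0) ≤ r * M.mulVec u i0 := by
  obtain ⟨v, hv0, hv⟩ := (mem_spec_iff (cx M) z).1 hz
  set w : m → ℝ := fun j => ‖v j‖ with hw
  obtain ⟨i0, -, hi0⟩ := Finset.exists_max_image Finset.univ (fun i => w i / u i)
    ⟨Classical.arbitrary m, Finset.mem_univ _⟩
  set r : ℝ := w i0 / u i0 with hr
  have hwpos : 0 < w i0 := by
    obtain ⟨k, hk⟩ := Function.ne_iff.1 hv0
    have hwk : 0 < w k := by simpa [hw] using (norm_pos_iff.2 hk)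
    have h2 : 0 < w i0 / u i0 := lt_of_lt_of_le (div_pos hwk (hu k)) (hi0 k (Finset.mem_univ _))
    calc (0:ℝ) < (w i0 / u i0) * u i0 := mul_pos h2 (hu i0)
      _ = w i0 := div_mul_cancel₀ _ (hu i0).ne'
  have hrpos : 0 < r := div_pos hwpos (hu i0)
  refine ⟨i0, r, hrpos, ?_⟩
  have hru : r * u i0 = w i0 := div_mul_cancel₀ _ (hu i0).ne'
  rw [hru]
  calc ‖z‖ * w i0 ≤ M.mulVec w i0 := abs_eigen M hM hv i0
    _ ≤ ∑ j, M i0 j * (r * u j) := by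
        apply Finset.sum_le_sum; intro j _
        apply mul_le_mul_of_nonneg_left _ (hM i0 j)
        have := hi0 j (Finset.mem_univ _)
        calc w j = (w j / u j) * u j := (div_mul_cancel₀ _ (hu j).ne').symm
          _ ≤ r * u j := mul_le_mul_of_nonneg_right this (hu j).le
    _ = r * M.mulVec u i0 := by
        have hmv : M.mulVec u i0 = ∑ j, M i0 j * u j := rfl
        rw [hmv, Finset.mul_sum]
        apply Finset.sum_congr rfl; intro j _; ring

/-- upper Collatz-Wielandt bound -/
lemma specRad_le_of [Nonempty m] (M : Matrix m m ℝ) (hM : ∀ i j, 0 ≤ M i j)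
    (u : m → ℝ) (hu : ∀ i, 0 < u i) {c : ℝ} (h : ∀ i, M.mulVec u i ≤ c * u i) :
    specRad M ≤ c := by
  have hc0 : 0 ≤ c := by
    have i : m := Classical.arbitrary m
    have h0 : (0:ℝ) ≤ M.mulVec u i :=
      Finset.sum_nonneg fun j _ => mul_nonneg (hM i j) (hu j).le
    nlinarith [h i, hu i]
  rw [show specRad M = sSup ((fun z : ℂ => ‖z‖) '' spectrum ℂ (cx M)) from rfl]
  apply Real.sSup_le _ hc0
  rintro x ⟨z, hz, rfl⟩
  obtain ⟨i0, r, hr, hb⟩ := eigen_bound M hM u hu hz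
  have : r * M.mulVec u i0 ≤ r * (c * u i0) := mul_le_mul_of_nonneg_left (h i0) hr.le
  have h2 : ‖z‖ * (r * u i0) ≤ c * (r * u i0) := by nlinarith
  exact le_of_mul_le_mul_right (by linarith [h2]) (mul_pos hr (hu i0))

/-- strict upper Collatz-Wielandt bound -/
lemma specRad_lt_of [Nonempty m] (M : Matrix m m ℝ) (hM : ∀ i j, 0 ≤ M i j)
    (u : m → ℝ) (hu : ∀ i, 0 < u i) {c : ℝ} (h : ∀ i, M.mulVec u i < c * u i) :
    specRad M < c := by
  obtain ⟨z, hz, hze⟩ := exists_specRad M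
  rw [← hze]
  obtain ⟨i0, r, hr, hb⟩ := eigen_bound M hM u hu hz
  have : r * M.mulVec u i0 < r * (c * u i0) := by
    exact mul_lt_mul_of_pos_left (h i0) hr
  have h2 : ‖z‖ * (r * u i0) < c * (r * u i0) := by nlinarith
  exact lt_of_mul_lt_mul_right (by nlinarith) (mul_pos hr (hu i0)).le


/-- monotonicity for Z-matrices with a positive "dominance" vector -/
lemma zmat_mono (C : Matrix m m ℝ) (hoff : ∀ i j, i ≠ j → C i j ≤ 0)
    (u : m → ℝ) (hu : ∀ i, 0 < u i) (hCu : ∀ i, 0 < C.mulVec u i)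
    (x : m → ℝ) (hx : ∀ i, 0 ≤ C.mulVec x i) : ∀ i, 0 ≤ x i := by
  by_contra hcon
  push_neg at hcon
  obtain ⟨iw, hiw⟩ := hcon
  have hne : Nonempty m := ⟨iw⟩
  obtain ⟨i0, -, hi0⟩ := Finset.exists_min_image Finset.univ (fun i => x i / u i)
    ⟨iw, Finset.mem_univ _⟩
  set r : ℝ := x i0 / u i0 with hr
  have hrneg : r < 0 := by
    have h1 : x iw / u iw < 0 := div_neg_of_neg_of_pos hiw (hu iw)
    exact lt_of_le_of_lt (hi0 iw (Finset.mem_univ _)) h1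
  have hkey : ∀ j, r * u j ≤ x j := by
    intro j
    have := hi0 j (Finset.mem_univ _)
    calc r * u j ≤ (x j / u j) * u j := mul_le_mul_of_nonneg_right this (hu j).le
      _ = x j := div_mul_cancel₀ _ (hu j).ne'
  have hx0 : x i0 = r * u i0 := (div_mul_cancel₀ _ (hu i0).ne').symm
  have hb : C.mulVec x i0 ≤ r * C.mulVec u i0 := by
    have hmx : C.mulVec x i0 = ∑ j, C i0 j * x j := rfl
    have hmu : C.mulVec u i0 = ∑ j, C i0 j * u j := rfl
    rw [hmx, hmu, Finset.mul_sum]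
    apply Finset.sum_le_sum
    intro j _
    rcases eq_or_ne j i0 with rfl | hj
    · rw [hx0]; ring_nf; exact le_refl _
    · calc C i0 j * x j ≤ C i0 j * (r * u j) :=
            mul_le_mul_of_nonpos_left (hkey j) (hoff i0 j (Ne.symm hj))
        _ = r * (C i0 j * u j) := by ring
  have : C.mulVec x i0 < 0 := lt_of_le_of_lt hb (mul_neg_of_neg_of_pos hrneg (hCu i0))
  exact absurd (hx i0) (not_le.2 this)

/-- strict monotonicity -/
lemma zmat_mono_strict (C : Matrix m m ℝ) (hoff : ∀ i j, i ≠ j → C i j ≤ 0)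
    (u : m → ℝ) (hu : ∀ i, 0 < u i) (hCu : ∀ i, 0 < C.mulVec u i)
    (x : m → ℝ) (hx : ∀ i, 0 < C.mulVec x i) : ∀ i, 0 < x i := by
  intro i
  have hne : Nonempty m := ⟨i⟩
  obtain ⟨i0, -, hi0⟩ := Finset.exists_min_image Finset.univ (fun i => x i / u i)
    ⟨i, Finset.mem_univ _⟩
  set r : ℝ := x i0 / u i0 with hr
  have hkey : ∀ j, r * u j ≤ x j := by
    intro j
    have := hi0 j (Finset.mem_univ _)
    calc r * u j ≤ (x j / u j) * u j := mul_le_mul_of_nonneg_right this (hu j).le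
      _ = x j := div_mul_cancel₀ _ (hu j).ne'
  have hx0 : x i0 = r * u i0 := (div_mul_cancel₀ _ (hu i0).ne').symm
  have hb : C.mulVec x i0 ≤ r * C.mulVec u i0 := by
    have hmx : C.mulVec x i0 = ∑ j, C i0 j * x j := rfl
    have hmu : C.mulVec u i0 = ∑ j, C i0 j * u j := rfl
    rw [hmx, hmu, Finset.mul_sum]
    apply Finset.sum_le_sum
    intro j _
    rcases eq_or_ne j i0 with rfl | hj
    · rw [hx0]; ring_nf; exact le_refl _
    · calc C i0 j * x j ≤ C i0 j * (r * u j) :=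
            mul_le_mul_of_nonpos_left (hkey j) (hoff i0 j (Ne.symm hj))
        _ = r * (C i0 j * u j) := by ring
  have hrpos : 0 < r := by
    by_contra hc
    push_neg at hc
    have : C.mulVec x i0 ≤ 0 := le_trans hb (mul_nonpos_of_nonpos_of_nonneg hc (hCu i0).le)
    exact absurd (hx i0) (not_lt.2 this)
  calc (0:ℝ) < r * u i := mul_pos hrpos (hu i)
    _ ≤ x i := hkey i

lemma zmat_isUnit_det (C : Matrix m m ℝ) (hoff : ∀ i j, i ≠ j → C i j ≤ 0)
    (u : m → ℝ) (hu : ∀ i, 0 < u i) (hCu : ∀ i, 0 < C.mulVec u i) :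
    IsUnit C.det := by
  rw [isUnit_iff_ne_zero]
  intro hdet
  obtain ⟨v, hv0, hv⟩ := Matrix.exists_mulVec_eq_zero_iff.2 hdet
  have h1 : ∀ i, 0 ≤ v i := zmat_mono C hoff u hu hCu v (by intro i; rw [hv]; exact le_refl _)
  have h2 : ∀ i, 0 ≤ -v i := by
    have : C.mulVec (-v) = 0 := by rw [Matrix.mulVec_neg, hv, neg_zero]
    simpa using zmat_mono C hoff u hu hCu (-v) (by intro i; rw [this]; exact le_refl _)
  apply hv0
  funext i
  have := h1 i; have := h2 i
  simp only [Pi.zero_apply]; linarith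

lemma zmat_inv_nonneg (C : Matrix m m ℝ) (hoff : ∀ i j, i ≠ j → C i j ≤ 0)
    (u : m → ℝ) (hu : ∀ i, 0 < u i) (hCu : ∀ i, 0 < C.mulVec u i) :
    ∀ i j, 0 ≤ C⁻¹ i j := by
  intro i j
  have hunit := zmat_isUnit_det C hoff u hu hCu
  have hid : C * C⁻¹ = 1 := Matrix.mul_nonsing_inv C hunit
  apply zmat_mono C hoff u hu hCu (fun k => C⁻¹ k j)
  intro i'
  have : C.mulVec (fun k => C⁻¹ k j) i' = (C * C⁻¹) i' j := by
    rw [Matrix.mul_apply]; rfl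
  rw [this, hid]
  by_cases h : i' = j <;> simp [Matrix.one_apply, h]

lemma zmat_diag_pos (C : Matrix m m ℝ) (hoff : ∀ i j, i ≠ j → C i j ≤ 0)
    (u : m → ℝ) (hu : ∀ i, 0 < u i) (hCu : ∀ i, 0 < C.mulVec u i) :
    ∀ i, 0 < C i i := by
  intro i
  have h1 : C.mulVec u i ≤ C i i * u i := by
    have hmu : C.mulVec u i = ∑ j, C i j * u j := rfl
    rw [hmu]
    calc ∑ j, C i j * u j ≤ ∑ j, (if j = i then C i i * u i else 0) := by
          apply Finset.sum_le_sum; intro j _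
          rcases eq_or_ne j i with rfl | hj
          · simp
          · simp only [hj, if_false]
            exact mul_nonpos_of_nonpos_of_nonneg (hoff i j (Ne.symm hj)) (hu j).le
      _ = C i i * u i := by simp
  have := hCu i
  nlinarith [hu i]

lemma zmat_inv_diag_pos (C : Matrix m m ℝ) (hoff : ∀ i j, i ≠ j → C i j ≤ 0)
    (u : m → ℝ) (hu : ∀ i, 0 < u i) (hCu : ∀ i, 0 < C.mulVec u i) :
    ∀ i, 0 < C⁻¹ i i := by
  intro i
  have hunit := zmat_isUnit_det C hoff u hu hCu
  have hid : C * C⁻¹ = 1 := Matrix.mul_nonsing_inv C hunit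
  have hinv := zmat_inv_nonneg C hoff u hu hCu
  have h1 : (1:ℝ) = ∑ j, C i j * C⁻¹ j i := by
    have : (C * C⁻¹) i i = ∑ j, C i j * C⁻¹ j i := Matrix.mul_apply
    rw [← this, hid, Matrix.one_apply_eq]
  have h2 : (1:ℝ) ≤ C i i * C⁻¹ i i := by
    rw [h1]
    calc ∑ j, C i j * C⁻¹ j i ≤ ∑ j, (if j = i then C i i * C⁻¹ i i else 0) := by
          apply Finset.sum_le_sum; intro j _
          rcases eq_or_ne j i with rfl | hj
          · simp
          · simp only [hj, if_false]
            exact mul_nonpos_of_nonpos_of_nonneg (hoff i j (Ne.symm hj)) (hinv j i)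
      _ = C i i * C⁻¹ i i := by simp
  nlinarith [zmat_diag_pos C hoff u hu hCu i]



lemma mul_entry_nonneg {X Y : Matrix m m ℝ} (hX : ∀ i j, 0 ≤ X i j) (hY : ∀ i j, 0 ≤ Y i j) :
    ∀ i j, 0 ≤ (X * Y) i j := by
  intro i j
  rw [Matrix.mul_apply]
  exact Finset.sum_nonneg fun l _ => mul_nonneg (hX i l) (hY l j)

lemma pow_entry_nonneg {Y : Matrix m m ℝ} (hY : ∀ i j, 0 ≤ Y i j) :
    ∀ k i j, 0 ≤ (Y ^ k) i j := by
  intro k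
  induction k with
  | zero => intro i j; rw [pow_zero]; by_cases h : i = j <;> simp [Matrix.one_apply, h]
  | succ k ih => intro i j; rw [pow_succ]; exact mul_entry_nonneg ih hY i j

lemma rowsum_pow_le {Y : Matrix m m ℝ} (hY : ∀ i j, 0 ≤ Y i j) {β : ℝ} (hβ0 : 0 ≤ β)
    (hrow : ∀ i, ∑ j, Y i j ≤ β) : ∀ k i, ∑ j, (Y ^ k) i j ≤ β ^ k := by
  intro k
  induction k with
  | zero => intro i; rw [pow_zero, pow_zero]; simp [Matrix.one_apply]
  | succ k ih =>
    intro i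
    rw [pow_succ]
    calc ∑ j, (Y ^ k * Y) i j = ∑ j, ∑ l, (Y ^ k) i l * Y l j := by
          apply Finset.sum_congr rfl; intro j _; rw [Matrix.mul_apply]
      _ = ∑ l, (Y ^ k) i l * (∑ j, Y l j) := by
          rw [Finset.sum_comm]
          apply Finset.sum_congr rfl; intro l _; rw [Finset.mul_sum]
      _ ≤ ∑ l, (Y ^ k) i l * β := by
          apply Finset.sum_le_sum; intro l _
          exact mul_le_mul_of_nonneg_left (hrow l) (pow_entry_nonneg hY k i l)
      _ = (∑ l, (Y ^ k) i l) * β := by rw [Finset.sum_mul]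
      _ ≤ β ^ k * β := mul_le_mul_of_nonneg_right (ih i) hβ0
      _ = β ^ (k + 1) := (pow_succ β k).symm

lemma entry_pow_le {Y : Matrix m m ℝ} (hY : ∀ i j, 0 ≤ Y i j) {β : ℝ} (hβ0 : 0 ≤ β)
    (hrow : ∀ i, ∑ j, Y i j ≤ β) (k : ℕ) (i j : m) : (Y ^ k) i j ≤ β ^ k :=
  le_trans (Finset.single_le_sum (fun l _ => pow_entry_nonneg hY k i l) (Finset.mem_univ j))
    (rowsum_pow_le hY hβ0 hrow k i)

/-- Neumann series for an entrywise-nonnegative matrix with small row sums. -/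
lemma neumann {Y : Matrix m m ℝ} (hY : ∀ i j, 0 ≤ Y i j) {β : ℝ} (hβ0 : 0 ≤ β) (hβ : β < 1)
    (hrow : ∀ i, ∑ j, Y i j ≤ β) :
    ∃ T : Matrix m m ℝ, (∀ i j, 0 ≤ T i j) ∧ (1 - Y) * T = 1 ∧ T * (1 - Y) = 1 := by
  have hsum : ∀ i j, Summable fun k => (Y ^ k) i j := by
    intro i j
    exact Summable.of_nonneg_of_le (fun k => pow_entry_nonneg hY k i j)
      (fun k => entry_pow_le hY hβ0 hrow k i j) (summable_geometric_of_lt_one hβ0 hβ)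
  set T : Matrix m m ℝ := Matrix.of (fun i j => ∑' k, (Y ^ k) i j) with hT
  have hTapp : ∀ i j, T i j = ∑' k, (Y ^ k) i j := fun i j => rfl
  have hTnn : ∀ i j, 0 ≤ T i j := fun i j =>
    tsum_nonneg fun k => pow_entry_nonneg hY k i j
  refine ⟨T, hTnn, ?_, ?_⟩
  · ext i j
    have hYT : (Y * T) i j = ∑' k, (Y ^ (k + 1)) i j := by
      rw [Matrix.mul_apply]
      calc ∑ l, Y i l * T l j = ∑ l, ∑' k, Y i l * (Y ^ k) l j := by
            apply Finset.sum_congr rfl; intro l _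
            rw [hTapp, ← Summable.tsum_mul_left _ (hsum l j)]
        _ = ∑' k, ∑ l, Y i l * (Y ^ k) l j := by
            refine (Summable.tsum_finsetSum ?_).symm
            intro l _
            exact Summable.mul_left _ (hsum l j)
        _ = ∑' k, (Y ^ (k + 1)) i j := by
            apply tsum_congr; intro k
            rw [pow_succ']
            rw [Matrix.mul_apply]
    have h1 : ((1 - Y) * T) i j = T i j - (Y * T) i j := by
      rw [Matrix.sub_mul, Matrix.one_mul]; rfl
    rw [h1, hYT, hTapp, Summable.tsum_eq_zero_add (hsum i j)]
    simp [pow_zero]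
  · ext i j
    have hTY : (T * Y) i j = ∑' k, (Y ^ (k + 1)) i j := by
      rw [Matrix.mul_apply]
      calc ∑ l, T i l * Y l j = ∑ l, ∑' k, (Y ^ k) i l * Y l j := by
            apply Finset.sum_congr rfl; intro l _
            rw [hTapp, ← Summable.tsum_mul_right _ (hsum i l)]
        _ = ∑' k, ∑ l, (Y ^ k) i l * Y l j := by
            refine (Summable.tsum_finsetSum ?_).symm
            intro l _
            exact Summable.mul_right _ (hsum i l)
        _ = ∑' k, (Y ^ (k + 1)) i j := by
            apply tsum_congr; intro k
            rw [pow_succ]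
            rw [Matrix.mul_apply]
    have h1 : (T * (1 - Y)) i j = T i j - (T * Y) i j := by
      rw [Matrix.mul_sub, Matrix.mul_one]; rfl
    rw [h1, hTY, hTapp, Summable.tsum_eq_zero_add (hsum i j)]
    simp [pow_zero]


lemma cx_smul_one_sub (M : Matrix m m ℝ) (r : ℝ) :
    cx (r • (1 : Matrix m m ℝ) - M) = (r : ℂ) • (1 : Matrix m m ℂ) - cx M := by
  ext i j
  simp only [cx, Matrix.map_apply, Matrix.sub_apply, Matrix.smul_apply, Matrix.one_apply,
    smul_eq_mul]
  by_cases h : i = j <;> simp [h, Complex.ofReal_sub]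

/-- invertibility of `r•1 - M` for `r > specRad M` -/
lemma isUnit_res_det (M : Matrix m m ℝ) {r : ℝ} (hr : specRad M < r) :
    IsUnit (r • (1 : Matrix m m ℝ) - M).det := by
  rw [isUnit_iff_ne_zero]
  intro h0
  have hdet : ((r : ℂ) • (1 : Matrix m m ℂ) - cx M).det = 0 := by
    rw [← cx_smul_one_sub]
    have : (cx (r • (1 : Matrix m m ℝ) - M)).det
        = (algebraMap ℝ ℂ) (r • (1 : Matrix m m ℝ) - M).det := by
      rw [RingHom.map_det]; rfl
    rw [this, h0, map_zero]
  have hmem : (r : ℂ) ∈ spectrum ℂ (cx M) := (mem_spec_iff_det (cx M) (r : ℂ)).2 hdet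
  have := abs_le_specRad M hmem
  rw [Complex.norm_real, Real.norm_eq_abs] at this
  have : r ≤ specRad M := le_trans (le_abs_self r) this
  linarith

/-- base case: resolvent nonnegativity far to the right -/
lemma res_nonneg_of_big (M : Matrix m m ℝ) (hM : ∀ i j, 0 ≤ M i j) {s r : ℝ}
    (hrow : ∀ i, ∑ j, M i j ≤ s) (hs0 : 0 ≤ s) (hr : s < r) :
    ∀ i j, 0 ≤ (r • (1 : Matrix m m ℝ) - M)⁻¹ i j := by
  have hr0 : 0 < r := lt_of_le_of_lt hs0 hr
  set Y : Matrix m m ℝ := r⁻¹ • M with hY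
  have hYnn : ∀ i j, 0 ≤ Y i j := fun i j =>
    mul_nonneg (inv_nonneg.2 hr0.le) (hM i j)
  have hβ : s / r < 1 := (div_lt_one hr0).2 hr
  have hβ0 : 0 ≤ s / r := div_nonneg hs0 hr0.le
  have hrowY : ∀ i, ∑ j, Y i j ≤ s / r := by
    intro i
    have : ∑ j, Y i j = r⁻¹ * ∑ j, M i j := by
      rw [Finset.mul_sum]; rfl
    rw [this, div_eq_inv_mul]
    exact mul_le_mul_of_nonneg_left (hrow i) (inv_nonneg.2 hr0.le)
  obtain ⟨T, hTnn, hT1, hT2⟩ := neumann hYnn hβ0 hβ hrowY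
  have hfac : r • ((1 : Matrix m m ℝ) - Y) = r • (1 : Matrix m m ℝ) - M := by
    rw [smul_sub, hY, smul_smul, mul_inv_cancel₀ hr0.ne', one_smul]
  have hid : (r • (1 : Matrix m m ℝ) - M) * (r⁻¹ • T) = 1 := by
    rw [← hfac, Matrix.smul_mul, Matrix.mul_smul, smul_smul, mul_inv_cancel₀ hr0.ne',
      one_smul, hT1]
  rw [Matrix.inv_eq_right_inv hid]
  intro i j
  exact mul_nonneg (inv_nonneg.2 hr0.le) (hTnn i j)

/-- downward propagation of resolvent nonnegativity -/
lemma res_step (M : Matrix m m ℝ) {r c : ℝ} (hu : IsUnit (r • (1 : Matrix m m ℝ) - M).det)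
    (hRnn : ∀ i j, 0 ≤ (r • (1 : Matrix m m ℝ) - M)⁻¹ i j) (hc0 : 0 ≤ c)
    (hsmall : ∀ i, c * (∑ j, (r • (1 : Matrix m m ℝ) - M)⁻¹ i j) ≤ (1:ℝ)/2) :
    ∀ i j, 0 ≤ ((r - c) • (1 : Matrix m m ℝ) - M)⁻¹ i j := by
  set X : Matrix m m ℝ := r • (1 : Matrix m m ℝ) - M with hX
  set R : Matrix m m ℝ := X⁻¹ with hR
  have hXR : X * R = 1 := Matrix.mul_nonsing_inv X hu
  have hRX : R * X = 1 := Matrix.nonsing_inv_mul X hu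
  set Y : Matrix m m ℝ := c • R with hY
  have hYnn : ∀ i j, 0 ≤ Y i j := fun i j => mul_nonneg hc0 (hRnn i j)
  have hrowY : ∀ i, ∑ j, Y i j ≤ (1:ℝ)/2 := by
    intro i
    have : ∑ j, Y i j = c * ∑ j, R i j := by rw [Finset.mul_sum]; rfl
    rw [this]; exact hsmall i
  obtain ⟨T, hTnn, hT1, hT2⟩ := neumann hYnn (by norm_num) (by norm_num) hrowY
  have hfac : ((1 : Matrix m m ℝ) - Y) * X = (r - c) • (1 : Matrix m m ℝ) - M := by
    rw [Matrix.sub_mul, Matrix.one_mul, hY, Matrix.smul_mul, hRX, hX]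
    rw [sub_smul]
    abel
  have hid : ((r - c) • (1 : Matrix m m ℝ) - M) * (R * T) = 1 := by
    rw [← hfac]
    calc ((1 : Matrix m m ℝ) - Y) * X * (R * T)
        = ((1 : Matrix m m ℝ) - Y) * (X * R) * T := by
          rw [Matrix.mul_assoc, Matrix.mul_assoc, Matrix.mul_assoc]
      _ = ((1 : Matrix m m ℝ) - Y) * T := by rw [hXR, Matrix.mul_one]
      _ = 1 := hT1
  rw [Matrix.inv_eq_right_inv hid]
  exact mul_entry_nonneg hRnn hTnn



/-- limit from the right: resolvent nonnegativity passes to the boundary -/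
lemma res_limit [Nonempty m] (M : Matrix m m ℝ) {s : ℝ} (hs : specRad M < s) {ε0 : ℝ}
    (hε0 : 0 < ε0)
    (h : ∀ ε : ℝ, 0 < ε → ε ≤ ε0 → ∀ i j, 0 ≤ ((s + ε) • (1 : Matrix m m ℝ) - M)⁻¹ i j) :
    ∀ i j, 0 ≤ (s • (1 : Matrix m m ℝ) - M)⁻¹ i j := by
  set X : Matrix m m ℝ := s • (1 : Matrix m m ℝ) - M with hX
  set R : Matrix m m ℝ := X⁻¹ with hR
  have hu : IsUnit X.det := isUnit_res_det M hs
  have hXR : X * R = 1 := Matrix.mul_nonsing_inv X hu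
  have hRX : R * X = 1 := Matrix.nonsing_inv_mul X hu
  obtain ⟨K, hK0, hKb⟩ : ∃ K : ℝ, 0 ≤ K ∧ ∀ l, ∑ j, |R l j| ≤ K := by
    refine ⟨Finset.univ.sup' Finset.univ_nonempty (fun l => ∑ j, |R l j|), ?_, ?_⟩
    · exact le_trans (Finset.sum_nonneg fun j _ => abs_nonneg _)
        (Finset.le_sup' (fun l => ∑ j, |R l j|) (Finset.mem_univ (Classical.arbitrary m)))
    · intro l; exact Finset.le_sup' (fun l => ∑ j, |R l j|) (Finset.mem_univ l)
  have hKentry : ∀ l j, |R l j| ≤ K := fun l j =>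
    le_trans (Finset.single_le_sum (fun j _ => abs_nonneg (R l j)) (Finset.mem_univ j)) (hKb l)
  have hKrow : ∀ l, |∑ j, R l j| ≤ K := fun l =>
    le_trans (Finset.abs_sum_le_sum_abs _ _) (hKb l)
  have hmain : ∀ ε : ℝ, 0 < ε → ε ≤ ε0 → ε * K ≤ 1/2 →
      ∀ i j, -(ε * (2*K*K)) ≤ R i j := by
    intro ε hε hεε0 hεK i j
    set Xe : Matrix m m ℝ := (s + ε) • (1 : Matrix m m ℝ) - M with hXe
    have hue : IsUnit Xe.det := isUnit_res_det M (by linarith)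
    set Re : Matrix m m ℝ := Xe⁻¹ with hRe
    have hXRe : Xe * Re = 1 := Matrix.mul_nonsing_inv Xe hue
    have hRXe : Re * Xe = 1 := Matrix.nonsing_inv_mul Xe hue
    have hRenn : ∀ i j, 0 ≤ Re i j := h ε hε hεε0
    have hXeX : Xe = X + ε • (1 : Matrix m m ℝ) := by
      rw [hXe, hX, add_smul]; abel
    have hiden : R = Re + ε • (Re * R) := by
      have h1 : Re * Xe * R = R := by rw [hRXe, Matrix.one_mul]
      have h2 : Re * Xe * R = Re + ε • (Re * R) := by
        rw [hXeX, Matrix.mul_add, Matrix.add_mul]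
        rw [Matrix.mul_assoc Re X R, hXR, Matrix.mul_one]
        congr 1
        rw [Matrix.mul_smul, Matrix.mul_one, Matrix.smul_mul]
      rw [h1] at h2
      exact h2
    have hRentry : ∀ i' j', R i' j' = Re i' j' + ε * (Re * R) i' j' := by
      intro i' j'
      have := congrFun (congrFun hiden i') j'
      simpa [Matrix.add_apply, Matrix.smul_apply, smul_eq_mul] using this
    have hswap : ∀ i', ∑ j', (Re * R) i' j' = ∑ l, Re i' l * (∑ j', R l j') := by
      intro i'
      simp_rw [Matrix.mul_apply]
      rw [Finset.sum_comm]
      exact Finset.sum_congr rfl fun l _ => (Finset.mul_sum _ _ _).symm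
    have hrowRe : ∀ i', ∑ l, Re i' l ≤ 2 * K := by
      intro i'
      have hρ0 : 0 ≤ ∑ l, Re i' l := Finset.sum_nonneg fun l _ => hRenn i' l
      have hReR_low : -(K * ∑ l, Re i' l) ≤ ∑ j', (Re * R) i' j' := by
        rw [hswap i']
        have h2 : ∑ l, Re i' l * (-K) ≤ ∑ l, Re i' l * (∑ j', R l j') := by
          apply Finset.sum_le_sum
          intro l _
          exact mul_le_mul_of_nonneg_left (neg_le_of_abs_le (hKrow l)) (hRenn i' l)
        calc -(K * ∑ l, Re i' l) = ∑ l, Re i' l * (-K) := by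
              rw [← Finset.sum_mul]; ring
          _ ≤ _ := h2
      have hsum : ∑ l, Re i' l = (∑ j', R i' j') - ε * ∑ j', (Re * R) i' j' := by
        rw [Finset.mul_sum, ← Finset.sum_sub_distrib]
        apply Finset.sum_congr rfl
        intro j' _
        rw [hRentry i' j']; ring
      have hRK : ∑ j', R i' j' ≤ K := le_of_abs_le (hKrow i')
      have hmulε : ε * (-(K * ∑ l, Re i' l)) ≤ ε * ∑ j', (Re * R) i' j' :=
        mul_le_mul_of_nonneg_left hReR_low hε.le
      nlinarith [hεK, hρ0]
    have hlow : -(K * ∑ l, Re i l) ≤ (Re * R) i j := by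
      rw [Matrix.mul_apply]
      have h2 : ∑ l, Re i l * (-K) ≤ ∑ l, Re i l * R l j := by
        apply Finset.sum_le_sum
        intro l _
        exact mul_le_mul_of_nonneg_left (neg_le_of_abs_le (hKentry l j)) (hRenn i l)
      calc -(K * ∑ l, Re i l) = ∑ l, Re i l * (-K) := by rw [← Finset.sum_mul]; ring
        _ ≤ _ := h2
    have he := hRentry i j
    have hmulε : ε * (-(K * ∑ l, Re i l)) ≤ ε * (Re * R) i j :=
      mul_le_mul_of_nonneg_left hlow hε.le
    have hmulρ : (ε * K) * (∑ l, Re i l) ≤ (ε * K) * (2 * K) :=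
      mul_le_mul_of_nonneg_left (hrowRe i) (mul_nonneg hε.le hK0)
    nlinarith [hRenn i j]
  intro i j
  by_contra hneg
  push_neg at hneg
  set ε : ℝ := min (min ε0 (1/(2*K+1))) ((-(R i j))/(2*K*K+1)) with hε
  have hRneg : 0 < -(R i j) := by linarith
  have hεpos : 0 < ε := by
    apply lt_min (lt_min hε0 (by positivity))
    positivity
  have h1 : ε ≤ ε0 := le_trans (min_le_left _ _) (min_le_left _ _)
  have h2 : ε * K ≤ 1/2 := by
    have hεb : ε ≤ 1/(2*K+1) := le_trans (min_le_left _ _) (min_le_right _ _)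
    have h2K : (0:ℝ) < 2*K+1 := by linarith
    have h3 : ε * K ≤ (1/(2*K+1)) * K := mul_le_mul_of_nonneg_right hεb hK0
    have h4 : (1/(2*K+1)) * K ≤ 1/2 := by
      rw [one_div, inv_mul_eq_div, div_le_iff₀ h2K]
      nlinarith
    linarith
  have h3 := hmain ε hεpos h1 h2 i j
  have h4 : ε ≤ (-(R i j))/(2*K*K+1) := min_le_right _ _
  have h5 : ε * (2*K*K+1) ≤ -(R i j) := by
    rw [div_eq_mul_inv] at h4
    have h2K : (0:ℝ) < 2*K*K+1 := by nlinarith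
    calc ε * (2*K*K+1) ≤ ((-(R i j)) * (2*K*K+1)⁻¹) * (2*K*K+1) :=
          mul_le_mul_of_nonneg_right h4 h2K.le
      _ = -(R i j) := by field_simp
  nlinarith [hεpos]


/-- resolvent nonnegativity for all `q > specRad M` -/
lemma res_nonneg [Nonempty m] (M : Matrix m m ℝ) (hM : ∀ i j, 0 ≤ M i j) {q : ℝ}
    (hq : specRad M < q) : ∀ i j, 0 ≤ (q • (1 : Matrix m m ℝ) - M)⁻¹ i j := by
  obtain ⟨RS, hRS0, hRSb⟩ : ∃ RS : ℝ, 0 ≤ RS ∧ ∀ i, ∑ j, M i j ≤ RS := by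
    refine ⟨Finset.univ.sup' Finset.univ_nonempty (fun i => ∑ j, M i j), ?_, ?_⟩
    · exact le_trans (Finset.sum_nonneg fun j _ => hM _ j)
        (Finset.le_sup' (fun i => ∑ j, M i j) (Finset.mem_univ (Classical.arbitrary m)))
    · intro i; exact Finset.le_sup' (fun i => ∑ j, M i j) (Finset.mem_univ i)
  set r1 : ℝ := max q (RS + 1) with hr1
  have hbase : ∀ r : ℝ, RS + 1 ≤ r → ∀ i j, 0 ≤ (r • (1 : Matrix m m ℝ) - M)⁻¹ i j :=
    fun r hr => res_nonneg_of_big M hM hRSb hRS0 (by linarith)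
  set E : Set ℝ := {r | r ∈ Set.Icc q r1 ∧
    ∀ r' ∈ Set.Icc r r1, ∀ i j, 0 ≤ (r' • (1 : Matrix m m ℝ) - M)⁻¹ i j} with hE
  have hr1q : q ≤ r1 := le_max_left _ _
  have hr1RS : RS + 1 ≤ r1 := le_max_right _ _
  have hr1E : r1 ∈ E := by
    refine ⟨⟨hr1q, le_refl _⟩, ?_⟩
    intro r' hr'
    exact hbase r' (le_trans hr1RS hr'.1)
  have hEne : E.Nonempty := ⟨r1, hr1E⟩
  have hEbdd : BddBelow E := ⟨q, fun r hr => hr.1.1⟩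
  set s0 := sInf E with hs0
  have hs0q : q ≤ s0 := le_csInf hEne (fun r hr => hr.1.1)
  have hs0r1 : s0 ≤ r1 := csInf_le hEbdd hr1E
  have hs0spec : specRad M < s0 := lt_of_lt_of_le hq hs0q
  have hgt : ∀ r', s0 < r' → r' ≤ r1 → ∀ i j, 0 ≤ (r' • (1 : Matrix m m ℝ) - M)⁻¹ i j := by
    intro r' h1 h2
    obtain ⟨e, heE, he⟩ := exists_lt_of_csInf_lt hEne h1
    exact heE.2 r' ⟨he.le, h2⟩
  have hs0good : ∀ i j, 0 ≤ (s0 • (1 : Matrix m m ℝ) - M)⁻¹ i j := by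
    rcases eq_or_lt_of_le hs0r1 with heq | hlt
    · rw [heq]; exact hr1E.2 r1 ⟨le_refl _, le_refl _⟩
    · exact res_limit M hs0spec (show (0:ℝ) < r1 - s0 by linarith)
        (fun ε hε hεb => hgt (s0 + ε) (by linarith) (by linarith))
  rcases eq_or_lt_of_le hs0q with heq | hlt
  · rw [heq]; exact hs0good
  · exfalso
    obtain ⟨KR, hKR0, hKRb⟩ : ∃ KR : ℝ, 0 ≤ KR ∧
        ∀ i, ∑ j, (s0 • (1 : Matrix m m ℝ) - M)⁻¹ i j ≤ KR := by
      refine ⟨Finset.univ.sup' Finset.univ_nonempty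
        (fun i => ∑ j, (s0 • (1 : Matrix m m ℝ) - M)⁻¹ i j), ?_, ?_⟩
      · exact le_trans (Finset.sum_nonneg fun j _ => hs0good _ j)
          (Finset.le_sup' (fun i => ∑ j, (s0 • (1 : Matrix m m ℝ) - M)⁻¹ i j)
            (Finset.mem_univ (Classical.arbitrary m)))
      · intro i
        exact Finset.le_sup' (fun i => ∑ j, (s0 • (1 : Matrix m m ℝ) - M)⁻¹ i j)
          (Finset.mem_univ i)
    set c : ℝ := min (s0 - q) (1/(2*KR+1)) with hc
    have hcpos : 0 < c := lt_min (by linarith) (by positivity)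
    have hgoodlow : ∀ c', 0 ≤ c' → c' ≤ c →
        ∀ i j, 0 ≤ ((s0 - c') • (1 : Matrix m m ℝ) - M)⁻¹ i j := by
      intro c' h0 hc'
      apply res_step M (isUnit_res_det M hs0spec) hs0good h0
      intro i
      have h5 : c' * ∑ j, (s0 • (1 : Matrix m m ℝ) - M)⁻¹ i j ≤ c' * KR :=
        mul_le_mul_of_nonneg_left (hKRb i) h0
      have h6 : c' * KR ≤ (1/(2*KR+1)) * KR :=
        mul_le_mul_of_nonneg_right (le_trans hc' (min_le_right _ _)) hKR0
      have h2K : (0:ℝ) < 2*KR+1 := by linarith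
      have h7 : (1/(2*KR+1)) * KR ≤ 1/2 := by
        rw [one_div, inv_mul_eq_div, div_le_iff₀ h2K]
        nlinarith
      linarith
    have heE2 : s0 - c ∈ E := by
      have hcq : c ≤ s0 - q := min_le_left _ _
      refine ⟨⟨by linarith, by linarith⟩, ?_⟩
      intro r' hr'
      rcases lt_or_ge r' s0 with h | h
      · intro i j
        have h8 := hgoodlow (s0 - r') (by linarith) (by linarith [hr'.1]) i j
        rw [show s0 - (s0 - r') = r' by ring] at h8
        exact h8
      · rcases eq_or_lt_of_le h with heq2 | hlt2
        · rw [← heq2]; exact hs0good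
        · exact hgt r' hlt2 hr'.2
    have := csInf_le hEbdd heE2
    linarith

/-- lower Collatz-Wielandt bound -/
lemma le_specRad [Nonempty m] (M : Matrix m m ℝ) (hM : ∀ i j, 0 ≤ M i j)
    (w : m → ℝ) (hw : ∀ i, 0 ≤ w i) (hw0 : w ≠ 0) {α : ℝ}
    (h : ∀ i, α * w i ≤ M.mulVec w i) : α ≤ specRad M := by
  by_contra hcon
  push_neg at hcon
  set X : Matrix m m ℝ := α • (1 : Matrix m m ℝ) - M with hX
  have hu : IsUnit X.det := isUnit_res_det M hcon
  have hRnn : ∀ i j, 0 ≤ X⁻¹ i j := res_nonneg M hM hcon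
  have hz : ∀ i, X.mulVec w i ≤ 0 := by
    intro i
    have h1 : X.mulVec w i = α * w i - M.mulVec w i := by
      rw [hX, Matrix.sub_mulVec, Matrix.smul_mulVec, Matrix.one_mulVec]
      rfl
    rw [h1]; linarith [h i]
  have hweq : w = X⁻¹.mulVec (X.mulVec w) := by
    rw [Matrix.mulVec_mulVec, Matrix.nonsing_inv_mul X hu, Matrix.one_mulVec]
  have hwle : ∀ i, w i ≤ 0 := by
    intro i
    rw [hweq]
    have : X⁻¹.mulVec (X.mulVec w) i = ∑ j, X⁻¹ i j * X.mulVec w j := rfl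
    rw [this]
    exact Finset.sum_nonpos fun j _ => mul_nonpos_of_nonneg_of_nonpos (hRnn i j) (hz j)
  apply hw0
  funext i
  have := hw i; have := hwle i
  simp only [Pi.zero_apply]; linarith

lemma mulVec_nonneg {M : Matrix m m ℝ} (hM : ∀ i j, 0 ≤ M i j) {v : m → ℝ}
    (hv : ∀ i, 0 ≤ v i) : ∀ i, 0 ≤ M.mulVec v i := fun i =>
  Finset.sum_nonneg fun j _ => mul_nonneg (hM i j) (hv j)

lemma mulVec_mono_vec {K : Matrix m m ℝ} (hK : ∀ i j, 0 ≤ K i j) {x y : m → ℝ}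
    (h : ∀ i, x i ≤ y i) : ∀ i, K.mulVec x i ≤ K.mulVec y i := fun i =>
  Finset.sum_le_sum fun j _ => mul_le_mul_of_nonneg_left (h j) (hK i j)

lemma mulVec_mono_mat {X Y : Matrix m m ℝ} (h : ∀ i j, X i j ≤ Y i j) {w : m → ℝ}
    (hw : ∀ i, 0 ≤ w i) : ∀ i, X.mulVec w i ≤ Y.mulVec w i := fun i =>
  Finset.sum_le_sum fun j _ => mul_le_mul_of_nonneg_right (h i j) (hw j)

lemma mul_le_mul_entry {K X Y : Matrix m m ℝ} (hK : ∀ i j, 0 ≤ K i j)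
    (h : ∀ i j, X i j ≤ Y i j) : ∀ i j, (K * X) i j ≤ (K * Y) i j := by
  intro i j
  rw [Matrix.mul_apply, Matrix.mul_apply]
  exact Finset.sum_le_sum fun l _ => mul_le_mul_of_nonneg_left (h l j) (hK i l)

end MM

/-- Under (c1)–(c3), for every nonempty `J`: `tB_J − A_J` is an M-matrix for
all `τ_J ≤ t ≤ 1`, and is not an M-matrix for all `0 < t < τ_J`. -/
theorem stmt_15 {n : ℕ} (A B : Matrix (Fin n) (Fin n) ℝ)
    (hBA : IsUnit (B - A).det)
    (hc1 : ∀ i j, 0 ≤ A i j)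
    (hc2 : ∀ i j, i ≠ j → B i j ≤ A i j)
    (hc3 : ∃ u : Fin n → ℝ, (∀ i, 0 < u i) ∧ ∀ i, 0 < (B - A).mulVec u i) :
    ∀ J : Finset (Fin n), J.Nonempty →
      (∀ t : ℝ, tauJ A B J ≤ t → t ≤ 1 →
        IsMMatrix (t • subm B J - subm A J)) ∧
      (∀ t : ℝ, 0 < t → t < tauJ A B J →
        ¬ IsMMatrix (t • subm B J - subm A J)) := by
  intro J hJ
  classical
  obtain ⟨u, hu, hBAu⟩ := hc3
  haveI hne : Nonempty {i // i ∈ J} := ⟨⟨hJ.choose, hJ.choose_spec⟩⟩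
  set Aj : Matrix {i // i ∈ J} {i // i ∈ J} ℝ := subm A J with hAj
  set Bj : Matrix {i // i ∈ J} {i // i ∈ J} ℝ := subm B J with hBj
  set C : Matrix {i // i ∈ J} {i // i ∈ J} ℝ := Bj - Aj with hC
  set u' : {i // i ∈ J} → ℝ := fun i => u i.val with hu'
  have hAnn : ∀ i j, 0 ≤ Aj i j := fun i j => hc1 _ _
  have hCoff : ∀ i j, i ≠ j → C i j ≤ 0 := by
    intro i j hij
    have hne2 : (i : Fin n) ≠ (j : Fin n) := fun h => hij (Subtype.ext h)
    have h2 := hc2 i.val j.val hne2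
    have hCapp : C i j = B i.val j.val - A i.val j.val := rfl
    rw [hCapp]; linarith
  have hu'pos : ∀ i, 0 < u' i := fun i => hu _
  have hCu : ∀ i, 0 < C.mulVec u' i := by
    intro i
    have hfull : 0 < ∑ j, (B - A) i.val j * u j := hBAu i.val
    have hCapp : C.mulVec u' i = ∑ j : {i // i ∈ J}, (B - A) i.val j.val * u j.val := by
      apply Finset.sum_congr rfl; intro j _; rfl
    have hsub : (∑ j : {i // i ∈ J}, (B - A) i.val j.val * u j.val)
        = ∑ j ∈ J, (B - A) i.val j * u j :=
      Finset.sum_coe_sort J (fun j => (B - A) i.val j * u j)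
    have hnegpart : ∑ j ∈ Finset.univ \ J, (B - A) i.val j * u j ≤ 0 := by
      apply Finset.sum_nonpos
      intro j hj
      have hjJ : j ∉ J := (Finset.mem_sdiff.1 hj).2
      have hij : i.val ≠ j := fun h => hjJ (h ▸ i.property)
      have h3 := hc2 i.val j hij
      have h4 : (B - A) i.val j ≤ 0 := by
        have : (B - A) i.val j = B i.val j - A i.val j := rfl
        rw [this]; linarith
      exact mul_nonpos_of_nonpos_of_nonneg h4 (hu j).le
    have hsplit := Finset.sum_sdiff (Finset.subset_univ J)
      (f := fun j => (B - A) i.val j * u j)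
    rw [hCapp, hsub]
    linarith
  have hCdet : IsUnit C.det := MM.zmat_isUnit_det C hCoff u' hu'pos hCu
  have hKnn : ∀ i j, 0 ≤ C⁻¹ i j := MM.zmat_inv_nonneg C hCoff u' hu'pos hCu
  obtain ⟨γ, hγpos, hγ⟩ : ∃ γ : ℝ, 0 < γ ∧ ∀ i, γ ≤ C⁻¹ i i := by
    refine ⟨Finset.univ.inf' Finset.univ_nonempty (fun i => C⁻¹ i i), ?_, ?_⟩
    · rw [Finset.lt_inf'_iff]
      intro i _
      exact MM.zmat_inv_diag_pos C hCoff u' hu'pos hCu i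
    · intro i; exact Finset.inf'_le (fun i => C⁻¹ i i) (Finset.mem_univ i)
  have hKw : ∀ (w : {i // i ∈ J} → ℝ), (∀ i, 0 ≤ w i) → ∀ i, γ * w i ≤ C⁻¹.mulVec w i := by
    intro w hw i
    calc γ * w i ≤ C⁻¹ i i * w i := mul_le_mul_of_nonneg_right (hγ i) (hw i)
      _ ≤ ∑ j, C⁻¹ i j * w j := Finset.single_le_sum (f := fun j => C⁻¹ i j * w j)
          (fun j _ => mul_nonneg (hKnn i j) (hw j)) (Finset.mem_univ i)
  set Mt : Matrix {i // i ∈ J} {i // i ∈ J} ℝ := C⁻¹ * Aj with hMt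
  have hMnn : ∀ i j, 0 ≤ Mt i j := MM.mul_entry_nonneg hKnn hAnn
  set μ : ℝ := specRad Mt with hμ
  have hμ0 : 0 ≤ μ := MM.specRad_nonneg Mt
  have hτeq : tauJ A B J = μ / (1 + μ) := by
    unfold tauJ
    rw [← hBj, ← hAj, ← hC, ← hMt, ← hμ]
  constructor
  · -- PART 1
    intro t hτt ht1
    have h1μ : (0:ℝ) < 1 + μ := by linarith
    rw [hτeq] at hτt
    have hμt : μ - t*μ ≤ t := by
      rw [div_le_iff₀ h1μ] at hτt; nlinarith
    have ht0 : 0 ≤ t := le_trans (div_nonneg hμ0 h1μ.le) hτt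
    set X : Matrix {i // i ∈ J} {i // i ∈ J} ℝ := t • Bj - Aj with hX
    have hXoff : ∀ i j, i ≠ j → X i j ≤ 0 := by
      intro i j hij
      have hne2 : (i : Fin n) ≠ (j : Fin n) := fun h => hij (Subtype.ext h)
      have h2 := hc2 i.val j.val hne2
      have h3 := hc1 i.val j.val
      have hXapp : X i j = t * B i.val j.val - A i.val j.val := rfl
      rw [hXapp]
      nlinarith
    have hXC : X = t • C - (1-t) • Aj := by rw [hX, hC]; module
    -- all eigenvalues are 0 or have positive real part
    have hspec : ∀ ν : ℂ, ν ∈ spectrum ℂ (MM.cx X) → ν = 0 ∨ 0 < ν.re := by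
      intro ν hν
      by_cases hrepos : 0 < ν.re
      · exact Or.inr hrepos
      push_neg at hrepos
      left
      obtain ⟨v, hv0, hv⟩ := (MM.mem_spec_iff _ _).1 hν
      set w : {i // i ∈ J} → ℝ := fun i => ‖v i‖ with hw
      have hwnn : ∀ i, 0 ≤ w i := fun i => norm_nonneg _
      have hw0 : w ≠ 0 := by
        intro hweq
        apply hv0
        funext i
        have h4 : w i = 0 := congrFun hweq i
        have : ‖v i‖ = 0 := h4
        simpa [norm_eq_zero] using this
      obtain ⟨q0, hq0d⟩ : ∃ q0 : ℝ, ∀ i, C i i ≤ q0 :=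
        ⟨Finset.univ.sup' Finset.univ_nonempty (fun i => C i i),
          fun i => Finset.le_sup' (fun i => C i i) (Finset.mem_univ i)⟩
      have hq0pos : 0 < q0 :=
        lt_of_lt_of_le (MM.zmat_diag_pos C hCoff u' hu'pos hCu (Classical.arbitrary _)) (hq0d _)
      set Q : Matrix {i // i ∈ J} {i // i ∈ J} ℝ := t • (q0 • 1 - C) + (1-t) • Aj with hQ
      have hQnn : ∀ i j, 0 ≤ Q i j := by
        intro i j
        have h1 : 0 ≤ (q0 • (1 : Matrix {i // i ∈ J} {i // i ∈ J} ℝ) - C) i j := by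
          rcases eq_or_ne i j with rfl | hij
          · simp only [Matrix.sub_apply, Matrix.smul_apply, Matrix.one_apply_eq, smul_eq_mul,
              mul_one]
            linarith [hq0d i]
          · simp only [Matrix.sub_apply, Matrix.smul_apply, Matrix.one_apply_ne hij, smul_eq_mul,
              mul_zero]
            linarith [hCoff i j hij]
        have h2 := hAnn i j
        have h5 : Q i j = t * (q0 • (1 : Matrix {i // i ∈ J} {i // i ∈ J} ℝ) - C) i j
            + (1-t) * Aj i j := rfl
        rw [h5]
        have h6 := mul_nonneg ht0 h1
        nlinarith
      have hXQ : X = (t*q0) • (1 : Matrix {i // i ∈ J} {i // i ∈ J} ℝ) - Q := by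
        rw [hXC, hQ]; module
      have hQv : (MM.cx Q).mulVec v = (((t*q0 : ℝ) : ℂ) - ν) • v := by
        have hcx : MM.cx X = ((t*q0 : ℝ) : ℂ) • 1 - MM.cx Q := by
          rw [hXQ]; exact MM.cx_smul_one_sub Q (t*q0)
        have h6 := hv
        rw [hcx, Matrix.sub_mulVec, Matrix.smul_mulVec, Matrix.one_mulVec] at h6
        have h7 : (MM.cx Q).mulVec v = ((t*q0:ℝ):ℂ) • v - ν • v := by
          rw [← h6]; abel
        rw [h7, ← sub_smul]
      have habs : ∀ i, ‖((t*q0:ℝ):ℂ) - ν‖ * w i ≤ Q.mulVec w i :=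
        MM.abs_eigen Q hQnn hQv
      set δ : ℝ := ‖((t*q0:ℝ):ℂ) - ν‖ - t*q0 with hδ
      have htq0 : 0 ≤ t*q0 := mul_nonneg ht0 hq0pos.le
      have hδ0 : 0 ≤ δ := by
        have h7 : ((((t*q0:ℝ):ℂ) - ν)).re ≤ ‖((t*q0:ℝ):ℂ) - ν‖ :=
          Complex.re_le_norm _
        simp only [Complex.sub_re, Complex.ofReal_re] at h7
        rw [hδ]
        linarith
      have hQw : ∀ i, Q.mulVec w i = t*q0*(w i) - t*(C.mulVec w i) + (1-t)*(Aj.mulVec w i) := by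
        intro i
        have h8 : Q.mulVec w = t • (q0 • w - C.mulVec w) + (1-t) • (Aj.mulVec w) := by
          rw [hQ, Matrix.add_mulVec, Matrix.smul_mulVec, Matrix.smul_mulVec,
            Matrix.sub_mulVec, Matrix.smul_mulVec, Matrix.one_mulVec]
        rw [h8]
        simp only [Pi.add_apply, Pi.smul_apply, Pi.sub_apply, smul_eq_mul]
        ring
      have hkey : ∀ i, δ * w i + t * (C.mulVec w i) ≤ (1-t) * (Aj.mulVec w i) := by
        intro i
        have h8 := habs i
        rw [hQw i] at h8
        have h9 : ‖((t*q0:ℝ):ℂ) - ν‖ = t*q0 + δ := by rw [hδ]; ring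
        rw [h9] at h8
        nlinarith [hwnn i]
      have hxy := MM.mulVec_mono_vec hKnn hkey
      have hxcomp : ∀ i, C⁻¹.mulVec (fun i' => δ * w i' + t * (C.mulVec w i')) i
          = δ * (C⁻¹.mulVec w i) + t * w i := by
        intro i
        have hxeq : (fun i' => δ * w i' + t * (C.mulVec w i')) = δ • w + t • (C.mulVec w) := by
          funext i'; simp [Pi.add_apply, Pi.smul_apply, smul_eq_mul]
        rw [hxeq, Matrix.mulVec_add, Matrix.mulVec_smul, Matrix.mulVec_smul,
          Matrix.mulVec_mulVec, Matrix.nonsing_inv_mul C hCdet, Matrix.one_mulVec]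
        simp [Pi.add_apply, Pi.smul_apply, smul_eq_mul]
      have hycomp : ∀ i, C⁻¹.mulVec (fun i' => (1-t) * (Aj.mulVec w i')) i
          = (1-t) * (Mt.mulVec w i) := by
        intro i
        have hyeq : (fun i' => (1-t) * (Aj.mulVec w i')) = (1-t) • (Aj.mulVec w) := by
          funext i'; simp [Pi.smul_apply, smul_eq_mul]
        rw [hyeq, Matrix.mulVec_smul, Matrix.mulVec_mulVec, ← hMt]
        simp [Pi.smul_apply, smul_eq_mul]
      have hfin : ∀ i, δ * γ * w i + t * w i ≤ (1-t) * (Mt.mulVec w i) := by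
        intro i
        have h10 := hxy i
        rw [hxcomp i, hycomp i] at h10
        have h11 : γ * w i ≤ C⁻¹.mulVec w i := hKw w hwnn i
        have h12 : δ * (γ * w i) ≤ δ * (C⁻¹.mulVec w i) := mul_le_mul_of_nonneg_left h11 hδ0
        calc δ * γ * w i + t * w i = δ * (γ * w i) + t * w i := by ring
          _ ≤ δ * (C⁻¹.mulVec w i) + t * w i := by linarith
          _ ≤ (1-t) * (Mt.mulVec w i) := h10
      obtain ⟨iw, hiw⟩ : ∃ i, 0 < w i := by
        by_contra hcon; push_neg at hcon
        apply hw0; funext i; exact le_antisymm (hcon i) (hwnn i)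
      have hδeq : δ = 0 := by
        rcases eq_or_lt_of_le ht1 with h1 | h1
        · exfalso
          have h13 := hfin iw
          rw [← h1] at h13
          have h14 : 0 ≤ δ * γ * w iw := mul_nonneg (mul_nonneg hδ0 hγpos.le) (hwnn iw)
          nlinarith
        · have h1t : 0 < 1 - t := by linarith
          have hα : ∀ i, ((t + δ*γ)/(1-t)) * w i ≤ Mt.mulVec w i := by
            intro i
            rw [div_mul_eq_mul_div, div_le_iff₀ h1t]
            nlinarith [hfin i]
          have hle := MM.le_specRad Mt hMnn w hwnn hw0 hα
          rw [div_le_iff₀ h1t] at hle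
          have hδγ : δ * γ ≤ 0 := by nlinarith
          exact le_antisymm (by nlinarith) hδ0
      have habs2 : ‖((t*q0:ℝ):ℂ) - ν‖ = t*q0 := by
        rw [hδ] at hδeq; linarith
      have hsq := congrArg (fun r : ℝ => r^2) habs2
      simp only [Complex.sq_norm] at hsq
      rw [Complex.normSq_apply] at hsq
      simp only [Complex.sub_re, Complex.sub_im, Complex.ofReal_re, Complex.ofReal_im,
        zero_sub] at hsq
      have hre2 : ν.re^2 + ν.im^2 ≤ 0 := by nlinarith
      have hre0 : ν.re = 0 := by
        have : ν.re^2 = 0 := le_antisymm (by nlinarith [sq_nonneg ν.im]) (sq_nonneg _)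
        exact (pow_eq_zero_iff (by norm_num : (2:ℕ) ≠ 0)).1 this
      have him0 : ν.im = 0 := by
        have : ν.im^2 = 0 := le_antisymm (by nlinarith [sq_nonneg ν.re]) (sq_nonneg _)
        exact (pow_eq_zero_iff (by norm_num : (2:ℕ) ≠ 0)).1 this
      exact Complex.ext hre0 him0
    -- build the M-matrix certificate
    have hfinspec := MM.spec_finite (MM.cx X)
    have hFne : hfinspec.toFinset.Nonempty :=
      (Set.Finite.toFinset_nonempty hfinspec).2 (MM.spec_nonempty (MM.cx X))
    set g : ℂ → ℝ := fun ν => if 0 < ν.re then Complex.normSq ν / (2*ν.re) else 0 with hg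
    set q : ℝ := max (max (hfinspec.toFinset.sup' hFne g)
      (Finset.univ.sup' Finset.univ_nonempty (fun i => X i i))) 0 with hq
    have hq0 : 0 ≤ q := le_max_right _ _
    have hqd : ∀ i, X i i ≤ q := fun i =>
      le_trans (Finset.le_sup' (fun i => X i i) (Finset.mem_univ i))
        (le_trans (le_max_right _ _) (le_max_left _ _))
    have hqg : ∀ ν ∈ spectrum ℂ (MM.cx X), g ν ≤ q := by
      intro ν hν
      exact le_trans (Finset.le_sup' g (hfinspec.mem_toFinset.2 hν))
        (le_trans (le_max_left _ _) (le_max_left _ _))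
    refine ⟨q, q • 1 - X, ?_, by abel, ?_⟩
    · intro i j
      rcases eq_or_ne i j with rfl | hij
      · simp only [Matrix.sub_apply, Matrix.smul_apply, Matrix.one_apply_eq, smul_eq_mul, mul_one]
        linarith [hqd i]
      · simp only [Matrix.sub_apply, Matrix.smul_apply, Matrix.one_apply_ne hij, smul_eq_mul,
          mul_zero]
        linarith [hXoff i j hij]
    · rw [MM.specRad_eq]
      apply Real.sSup_le _ hq0
      rintro x ⟨lam, hlam, rfl⟩
      show ‖lam‖ ≤ q
      obtain ⟨v, hv0, hv⟩ := (MM.mem_spec_iff _ _).1 hlam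
      have hcx : MM.cx (q • 1 - X) = (q : ℂ) • 1 - MM.cx X := MM.cx_smul_one_sub X q
      rw [hcx, Matrix.sub_mulVec, Matrix.smul_mulVec, Matrix.one_mulVec] at hv
      have hXv : (MM.cx X).mulVec v = ((q:ℂ) - lam) • v := by
        have h15 : (MM.cx X).mulVec v = (q:ℂ) • v - lam • v := by rw [← hv]; abel
        rw [h15, ← sub_smul]
      have hνspec : (q:ℂ) - lam ∈ spectrum ℂ (MM.cx X) :=
        (MM.mem_spec_iff _ _).2 ⟨v, hv0, hXv⟩
      rcases hspec _ hνspec with h0 | hrepos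
      · have hlamq : lam = (q:ℂ) := (sub_eq_zero.1 h0).symm
        rw [hlamq, Complex.norm_real, Real.norm_eq_abs, abs_of_nonneg hq0]
      · set ν := (q:ℂ) - lam with hν
        have hgb : Complex.normSq ν / (2*ν.re) ≤ q := by
          have := hqg ν hνspec
          rw [hg] at this
          simpa [if_pos hrepos] using this
        have hgb2 : Complex.normSq ν ≤ 2*ν.re*q := by
          rw [div_le_iff₀ (by linarith : (0:ℝ) < 2*ν.re)] at hgb
          linarith
        have hlameq : lam = (q:ℂ) - ν := by rw [hν]; ring
        have habsq : ‖lam‖ ^ 2 ≤ q^2 := by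
          rw [hlameq, Complex.sq_norm, Complex.normSq_apply]
          simp only [Complex.sub_re, Complex.sub_im, Complex.ofReal_re, Complex.ofReal_im,
            zero_sub]
          have hns : Complex.normSq ν = ν.re^2 + ν.im^2 := by
            rw [Complex.normSq_apply]; ring
          nlinarith [hns, hgb2]
        nlinarith [norm_nonneg lam, habsq]
  · -- PART 2
    intro t ht0 htτ
    rw [hτeq] at htτ
    intro hMM
    obtain ⟨q, P, hPnn, hXqP, hPq⟩ := hMM
    have h1μ : (0:ℝ) < 1 + μ := by linarith
    have hkeyt : t * (1+μ) < μ := by rw [lt_div_iff₀ h1μ] at htτ; nlinarith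
    have ht1 : t < 1 := by nlinarith
    have hμpos : 0 < μ := by nlinarith
    have h1t : 0 < 1 - t := by linarith
    set s : ℝ := (1-t)/t with hs
    have hspos : 0 < s := div_pos h1t ht0
    have hst : s * t = 1 - t := by rw [hs]; field_simp
    have hsμ : 1 < s * μ := by
      rw [hs, div_mul_eq_mul_div, lt_div_iff₀ ht0]
      nlinarith
    obtain ⟨lam0, hlam0spec, hlam0abs⟩ := MM.exists_specRad Mt
    obtain ⟨v, hv0, hv⟩ := (MM.mem_spec_iff _ _).1 hlam0spec
    set w : {i // i ∈ J} → ℝ := fun i => ‖v i‖ with hw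
    have hwnn : ∀ i, 0 ≤ w i := fun i => norm_nonneg _
    have hw0 : w ≠ 0 := by
      intro hweq; apply hv0; funext i
      have h4 : w i = 0 := congrFun hweq i
      have : ‖v i‖ = 0 := h4
      simpa [norm_eq_zero] using this
    have hMw : ∀ i, μ * w i ≤ Mt.mulVec w i := by
      intro i
      have h5 := MM.abs_eigen Mt hMnn hv i
      rw [hlam0abs] at h5
      exact h5
    obtain ⟨iw, hiw⟩ : ∃ i, 0 < w i := by
      by_contra hcon; push_neg at hcon
      apply hw0; funext i; exact le_antisymm (hcon i) (hwnn i)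
    set D0 : Matrix {i // i ∈ J} {i // i ∈ J} ℝ := (1/t) • (C⁻¹ * (s • Mt)) with hD0
    have hsMnn : ∀ i j, 0 ≤ (s • Mt) i j := fun i j => mul_nonneg hspos.le (hMnn i j)
    have hD0nn : ∀ i j, 0 ≤ D0 i j := by
      intro i j
      have h6 := MM.mul_entry_nonneg hKnn hsMnn i j
      have h5 : D0 i j = (1/t) * (C⁻¹ * (s • Mt)) i j := rfl
      rw [h5]
      exact mul_nonneg (by positivity) h6
    set SS := Finset.univ.filter (fun i => 0 < w i) with hSS
    have hSSne : SS.Nonempty := ⟨iw, by simp [hSS, hiw]⟩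
    set cc : ℝ := SS.sup' hSSne (fun i => D0.mulVec w i / w i) with hcc
    have hcc0 : 0 ≤ cc := by
      have h6 : 0 ≤ D0.mulVec w iw / w iw :=
        div_nonneg (MM.mulVec_nonneg hD0nn hwnn iw) (hwnn iw)
      exact le_trans h6 (Finset.le_sup' (fun i => D0.mulVec w i / w i) (by simp [hSS, hiw]))
    have hccb : ∀ i, 0 < w i → D0.mulVec w i ≤ cc * w i := by
      intro i hwi
      have h7 : D0.mulVec w i / w i ≤ cc :=
        Finset.le_sup' (fun i => D0.mulVec w i / w i) (by simp [hSS, hwi])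
      rw [div_le_iff₀ hwi] at h7
      linarith
    set ε : ℝ := (s*μ - 1)/(cc+1) with hε
    have hccpos : (0:ℝ) < cc + 1 := by linarith
    have hεpos : 0 < ε := div_pos (by linarith) hccpos
    have hεcc : 1 < s*μ - ε*cc := by
      have h8 : ε * (cc+1) = s*μ - 1 := by rw [hε]; exact div_mul_cancel₀ _ hccpos.ne'
      nlinarith
    set Me : Matrix {i // i ∈ J} {i // i ∈ J} ℝ := t • C + ε • 1 with hMe
    have hMeoff : ∀ i j, i ≠ j → Me i j ≤ 0 := by
      intro i j hij
      have h9 : Me i j = t * C i j + ε * (1 : Matrix {i // i ∈ J} {i // i ∈ J} ℝ) i j := rfl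
      rw [h9, Matrix.one_apply_ne hij]
      have h10 := hCoff i j hij
      nlinarith
    have hMeu : ∀ i, 0 < Me.mulVec u' i := by
      intro i
      have h9 : Me.mulVec u' = t • (C.mulVec u') + ε • u' := by
        rw [hMe, Matrix.add_mulVec, Matrix.smul_mulVec, Matrix.smul_mulVec,
          Matrix.one_mulVec]
      rw [h9]
      simp only [Pi.add_apply, Pi.smul_apply, smul_eq_mul]
      have h10 := hCu i
      have h11 := hu'pos i
      have := mul_pos ht0 h10
      nlinarith
    have hMedet := MM.zmat_isUnit_det Me hMeoff u' hu'pos hMeu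
    have hMeinv := MM.zmat_inv_nonneg Me hMeoff u' hu'pos hMeu
    set N : Matrix {i // i ∈ J} {i // i ∈ J} ℝ := (1-t) • Aj with hN
    have hNnn : ∀ i j, 0 ≤ N i j := fun i j => mul_nonneg h1t.le (hAnn i j)
    set He : Matrix {i // i ∈ J} {i // i ∈ J} ℝ := Me⁻¹ * N with hHe
    have hHenn : ∀ i j, 0 ≤ He i j := MM.mul_entry_nonneg hMeinv hNnn
    have hMeHe : Me * He = N := by
      rw [hHe, ← Matrix.mul_assoc, Matrix.mul_nonsing_inv Me hMedet, Matrix.one_mul]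
    have hrel : t • (C * He) = N - ε • He := by
      have h10 : (t • C + ε • (1 : Matrix {i // i ∈ J} {i // i ∈ J} ℝ)) * He = N := by
        rw [← hMe]; exact hMeHe
      rw [Matrix.add_mul, Matrix.smul_mul, Matrix.smul_mul, Matrix.one_mul] at h10
      exact eq_sub_of_add_eq h10
    have hrel2 : t • He = (1-t) • Mt - ε • (C⁻¹ * He) := by
      have h11 := congrArg (fun Z => C⁻¹ * Z) hrel
      rw [Matrix.mul_smul, ← Matrix.mul_assoc, Matrix.nonsing_inv_mul C hCdet,
        Matrix.one_mul, Matrix.mul_sub, Matrix.mul_smul] at h11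
      rw [← hMt, Matrix.mul_smul] at h11
      exact h11
    have hHele : ∀ i j, He i j ≤ (s • Mt) i j := by
      intro i j
      have h12 := congrFun (congrFun hrel2 i) j
      simp only [Matrix.smul_apply, Matrix.sub_apply, smul_eq_mul] at h12
      have h13 : 0 ≤ (C⁻¹ * He) i j := MM.mul_entry_nonneg hKnn hHenn i j
      have h14 : (s • Mt) i j = s * Mt i j := rfl
      rw [h14, hs, div_mul_eq_mul_div, le_div_iff₀ ht0]
      nlinarith [mul_nonneg hεpos.le h13]
    have hHege : ∀ i j, (s • Mt - ε • D0) i j ≤ He i j := by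
      intro i j
      have h12 := congrFun (congrFun hrel2 i) j
      simp only [Matrix.smul_apply, Matrix.sub_apply, smul_eq_mul] at h12
      have h13 : (C⁻¹ * He) i j ≤ (C⁻¹ * (s • Mt)) i j := MM.mul_le_mul_entry hKnn hHele i j
      have h14 : D0 i j = (1/t) * (C⁻¹ * (s • Mt)) i j := rfl
      have h14' : D0 i j * t = (C⁻¹ * (s • Mt)) i j := by
        rw [h14]; field_simp
      have hentry : (s • Mt - ε • D0) i j = s * Mt i j - ε * D0 i j := rfl
      rw [hentry, ← mul_le_mul_iff_of_pos_right ht0]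
      have h26 : (s * Mt i j - ε * D0 i j) * t
          = (1-t) * Mt i j - ε * ((C⁻¹ * (s • Mt)) i j) := by
        have h27 : (s * Mt i j - ε * D0 i j) * t = (s*t) * Mt i j - ε * (D0 i j * t) := by ring
        rw [h27, hst, h14']
      calc (s * Mt i j - ε * D0 i j) * t
          = (1-t) * Mt i j - ε * ((C⁻¹ * (s • Mt)) i j) := h26
        _ ≤ (1-t) * Mt i j - ε * ((C⁻¹ * He) i j) := by
            have := mul_le_mul_of_nonneg_left h13 hεpos.le
            linarith
        _ = t * He i j := h12.symm
        _ = He i j * t := by ring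
    have hHew : ∀ i, (s*μ - ε*cc) * w i ≤ He.mulVec w i := by
      intro i
      rcases lt_or_ge 0 (w i) with hwi | hwi
      · have h16 := MM.mulVec_mono_mat hHege hwnn i
        have h17 : (s • Mt - ε • D0).mulVec w i
            = s*(Mt.mulVec w i) - ε*(D0.mulVec w i) := by
          rw [Matrix.sub_mulVec, Matrix.smul_mulVec, Matrix.smul_mulVec]
          simp [Pi.sub_apply, Pi.smul_apply, smul_eq_mul]
        rw [h17] at h16
        have h18 := hMw i
        have h19 := hccb i hwi
        have h20 : s * (μ * w i) ≤ s * (Mt.mulVec w i) :=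
          mul_le_mul_of_nonneg_left h18 hspos.le
        have h21 : ε * (D0.mulVec w i) ≤ ε * (cc * w i) :=
          mul_le_mul_of_nonneg_left h19 hεpos.le
        nlinarith
      · have hwi0 : w i = 0 := le_antisymm hwi (hwnn i)
        rw [hwi0, mul_zero]
        exact MM.mulVec_nonneg hHenn hwnn i
    have hge := MM.le_specRad He hHenn w hwnn hw0 hHew
    have hMeN : Me - N = (q+ε) • (1 : Matrix {i // i ∈ J} {i // i ∈ J} ℝ) - P := by
      rw [hMe, hN, hC]
      have haux : t • (Bj - Aj) + ε • (1 : Matrix {i // i ∈ J} {i // i ∈ J} ℝ)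
          - (1-t) • Aj = (t • Bj - Aj) + ε • 1 := by module
      rw [haux, hXqP]
      module
    have hPspec : specRad P < q + ε := lt_of_le_of_lt hPq (by linarith)
    set XE : Matrix {i // i ∈ J} {i // i ∈ J} ℝ := (q+ε) • 1 - P with hXE
    have hXEinvnn : ∀ i j, 0 ≤ XE⁻¹ i j := MM.res_nonneg P hPnn hPspec
    have hXEdet : IsUnit XE.det := MM.isUnit_res_det P hPspec
    set G : Matrix {i // i ∈ J} {i // i ∈ J} ℝ := XE⁻¹ * N with hG
    have hGnn : ∀ i j, 0 ≤ G i j := MM.mul_entry_nonneg hXEinvnn hNnn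
    have hid2 : (1 - He) * (1 + G) = 1 := by
      have h22 : Me * ((1 - He) * (1 + G)) = Me := by
        rw [← Matrix.mul_assoc, Matrix.mul_sub, Matrix.mul_one, hMeHe, hMeN]
        rw [Matrix.mul_add, Matrix.mul_one, hG, ← Matrix.mul_assoc,
          Matrix.mul_nonsing_inv XE hXEdet, Matrix.one_mul]
        rw [← hMeN]
        abel
      calc (1 - He) * (1 + G) = (Me⁻¹ * Me) * ((1 - He) * (1 + G)) := by
            rw [Matrix.nonsing_inv_mul Me hMedet, Matrix.one_mul]
        _ = Me⁻¹ * (Me * ((1 - He) * (1 + G))) := by rw [Matrix.mul_assoc]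
        _ = Me⁻¹ * Me := by rw [h22]
        _ = 1 := Matrix.nonsing_inv_mul Me hMedet
    set w2 : {i // i ∈ J} → ℝ := (1 + G).mulVec (fun _ => (1:ℝ)) with hw2
    have hw2eq : ∀ i, w2 i = 1 + G.mulVec (fun _ => (1:ℝ)) i := by
      intro i
      rw [hw2, Matrix.add_mulVec, Matrix.one_mulVec]
      rfl
    have hw2pos : ∀ i, 0 < w2 i := by
      intro i
      rw [hw2eq i]
      have h23 := MM.mulVec_nonneg hGnn (v := fun _ => (1:ℝ)) (fun _ => zero_le_one) i
      linarith
    have hHw2 : ∀ i, He.mulVec w2 i < 1 * w2 i := by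
      intro i
      have h23 : (1 - He).mulVec w2 = (fun _ => (1:ℝ)) := by
        rw [hw2, Matrix.mulVec_mulVec, hid2, Matrix.one_mulVec]
      have h24 : (1 - He).mulVec w2 i = w2 i - He.mulVec w2 i := by
        rw [Matrix.sub_mulVec, Matrix.one_mulVec]; rfl
      have h25 := congrFun h23 i
      rw [h24] at h25
      rw [one_mul]
      have h26 : w2 i - He.mulVec w2 i = 1 := h25
      linarith
    have hlt := MM.specRad_lt_of He hHenn w2 hw2pos hHw2
    linarith
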